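/- Let G = (V, E_1, …, E_k) be a multilayer graph and S_i ⊆ E_i (i ∈ [k]) labelings each fulfilling the STC for E_i with d_k(S_1,…,S_k) = 0. Then C = { n_e : e ∈ E_i∖S_i for some i ∈ [k] } is a vertex cover of the combined weighted wedge graph W of G, and Σ_{n_e ∈ C} w(n_e) = Σ_{i∈[k]} |E_i∖S_i|. -/

import Mathlib

open Finset

/-- A wedge `(v, {u, w})` of an edge set `E`. -/
def IsWedge {V : Type*} (E : Finset (Sym2 V)) (v u w : V) : Prop :=
  u ≠ v ∧ v ≠ w ∧ u ≠ w ∧ s(u, v) ∈ E ∧ s(v, w) ∈ E ∧ s(u, w) ∉ E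

/-- A labeling `S ⊆ E` fulfills the strong triadic closure for `E`. -/
def FulfillsSTC {V : Type*} (E S : Finset (Sym2 V)) : Prop :=
  ∀ u v w : V, u ≠ v → v ≠ w → u ≠ w → s(u, v) ∈ S → s(v, w) ∈ S → s(u, w) ∈ E

/-- `s(e)`: the number of layers in which `e` is labeled strong. -/
def sCount {V : Type*} [DecidableEq V] {k : ℕ} (Ss : Fin k → Finset (Sym2 V))
    (e : Sym2 V) : ℕ :=
  (Finset.univ.filter fun i => e ∈ Ss i).card

/-- `w(e)`: the number of layers in which `e` is labeled weak. -/
def wCount {V : Type*} [DecidableEq V] {k : ℕ} (Es Ss : Fin k → Finset (Sym2 V))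
    (e : Sym2 V) : ℕ :=
  (Finset.univ.filter fun i => e ∈ Es i ∧ e ∉ Ss i).card

/-- `d_k(S_1, …, S_k) = ∑_{e ∈ E, w(e) > 0} s(e)`: the number of disagreements. -/
def disagree {V : Type*} [DecidableEq V] {k : ℕ} (Es Ss : Fin k → Finset (Sym2 V)) : ℕ :=
  ∑ e ∈ (Finset.univ.biUnion Es).filter (fun e => 0 < wCount Es Ss e), sCount Ss e

/-- `C` (a set of vertices `n_e`, identified with the corresponding edges `e`) is a
vertex cover of the combined wedge graph `W` of the multilayer graph: in `W`,
`n_{uv}` and `n_{vw}` are adjacent iff `(v,{u,w})` is a wedge of some layer `E_i`,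
and a vertex cover contains at least one endpoint of every edge. -/
def IsCombinedWedgeGraphVC {V : Type*} {k : ℕ} (Es : Fin k → Finset (Sym2 V))
    (C : Finset (Sym2 V)) : Prop :=
  ∀ i : Fin k, ∀ v u w : V, IsWedge (Es i) v u w → s(u, v) ∈ C ∨ s(v, w) ∈ C

/-- The weight `w(n_e) = |{i ∈ [k] : e ∈ E_i}|` of the vertex `n_e` of the combined
weighted wedge graph. -/
def wedgeWeight {V : Type*} [DecidableEq V] {k : ℕ} (Es : Fin k → Finset (Sym2 V))
    (e : Sym2 V) : ℕ :=
  (Finset.univ.filter fun i => e ∈ Es i).card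

/-- From labelings fulfilling the STC in every layer with no disagreements, the set
`C = {n_e : e ∈ E_i ∖ S_i for some i}` is a vertex cover of the combined weighted
wedge graph, and its weight equals `∑_i |E_i ∖ S_i|`. -/
theorem consistent_stc_gives_vc {V : Type*} [DecidableEq V] {k : ℕ}
    (Es Ss : Fin k → Finset (Sym2 V)) (hS : ∀ i, Ss i ⊆ Es i)
    (hstc : ∀ i, FulfillsSTC (Es i) (Ss i)) (hd : disagree Es Ss = 0) :
    let C : Finset (Sym2 V) :=
      (Finset.univ.biUnion Es).filter fun e => ∃ i, e ∈ Es i ∧ e ∉ Ss i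
    IsCombinedWedgeGraphVC Es C ∧
      (∑ e ∈ C, wedgeWeight Es e) = ∑ i : Fin k, (Es i \ Ss i).card := by
  intro C
  -- membership in C
  have hmemC : ∀ e : Sym2 V, e ∈ C ↔ ∃ i, e ∈ Es i ∧ e ∉ Ss i := by
    intro e
    simp only [C, Finset.mem_filter, Finset.mem_biUnion, Finset.mem_univ, true_and]
    constructor
    · rintro ⟨-, h⟩; exact h
    · rintro ⟨i, h1, h2⟩; exact ⟨⟨i, h1⟩, ⟨i, h1, h2⟩⟩
  -- disagree = 0 implies: if e ∈ C then e ∉ Ss j for all j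
  have hkey : ∀ e ∈ C, ∀ j, e ∉ Ss j := by
    intro e he j hj
    rw [hmemC] at he
    obtain ⟨i, hi1, hi2⟩ := he
    have hmem : e ∈ ((Finset.univ.biUnion Es).filter (fun e => 0 < wCount Es Ss e)) := by
      simp only [Finset.mem_filter, Finset.mem_biUnion, Finset.mem_univ, true_and]
      refine ⟨⟨i, hi1⟩, ?_⟩
      rw [wCount, Finset.card_pos]
      exact ⟨i, by simp [hi1, hi2]⟩
    have := (Finset.sum_eq_zero_iff.mp hd) e hmem
    rw [sCount, Finset.card_eq_zero, Finset.filter_eq_empty_iff] at this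
    exact this (Finset.mem_univ j) hj
  constructor
  · intro i v u w hw
    obtain ⟨huv, hvw, huw, h1, h2, h3⟩ := hw
    by_cases hs1 : s(u, v) ∈ Ss i
    · by_cases hs2 : s(v, w) ∈ Ss i
      · exact absurd (hstc i u v w huv hvw huw hs1 hs2) h3
      · exact Or.inr ((hmemC _).mpr ⟨i, h2, hs2⟩)
    · exact Or.inl ((hmemC _).mpr ⟨i, h1, hs1⟩)
  · have : ∀ e ∈ C, wedgeWeight Es e = wCount Es Ss e := by
      intro e he
      unfold wedgeWeight wCount
      congr 1
      apply Finset.filter_congr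
      intro j _
      simp only [iff_self_and]
      intro _
      exact hkey e he j
    rw [Finset.sum_congr rfl this]
    unfold wCount
    have h1 : ∀ e ∈ C, (Finset.univ.filter fun i => e ∈ Es i ∧ e ∉ Ss i).card
        = ∑ j : Fin k, if e ∈ Es j ∧ e ∉ Ss j then 1 else 0 := fun e _ =>
      Finset.card_filter _ _
    rw [Finset.sum_congr rfl h1, Finset.sum_comm]
    apply Finset.sum_congr rfl
    intro j _
    rw [← Finset.card_filter]
    congr 1
    apply Finset.ext
    intro e
    simp only [Finset.mem_filter, Finset.mem_sdiff]
    constructor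
    · rintro ⟨-, h1, h2⟩; exact ⟨h1, h2⟩
    · rintro ⟨h1, h2⟩; exact ⟨(hmemC e).mpr ⟨j, h1, h2⟩, h1, h2⟩
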